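/- Let A ∈ ℝ^{d×d} satisfy ‖I_d − AᵀA‖ < 1 in operator norm (so A is invertible). Define S_0 = A and S_{t+1} = ½·S_t·(3I_d − S_tᵀS_t) for t ≥ 0. Then S_t → sgn(A) as t → ∞, and for every t ∈ ℕ, ‖S_t − sgn(A)‖ ≤ ‖I_d − S_tᵀS_t‖ ≤ ‖I_d − AᵀA‖^{2^t}. -/

import Mathlib

open Matrix MeasureTheory ProbabilityTheory

noncomputable section

/-- Frobenius norm of a real matrix. -/
def frob {m k : Type*} [Fintype m] [Fintype k] (A : Matrix m k ℝ) : ℝ :=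
  Real.sqrt (∑ i, ∑ j, (A i j) ^ 2)

/-- Spectral (operator) norm of a real matrix: the `ℓ² → ℓ²` operator norm. -/
def spec {m k : Type*} [Fintype m] [Fintype k] [DecidableEq k] (A : Matrix m k ℝ) : ℝ :=
  ‖LinearMap.toContinuousLinearMap (Matrix.toEuclideanLin A)‖

/-- Smallest singular value of a real matrix. -/
def sigmaMin {m k : Type*} [Fintype m] [Fintype k] [DecidableEq k] (A : Matrix m k ℝ) : ℝ :=
  ⨅ x : {x : EuclideanSpace ℝ k // ‖x‖ = 1}, ‖Matrix.toEuclideanLin A x.1‖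

/-- Nuclear norm (sum of singular values) of a square real matrix. -/
def nuclearNorm {d : ℕ} (A : Matrix (Fin d) (Fin d) ℝ) : ℝ :=
  ∑ i, Real.sqrt ((show (Aᵀ * A).IsHermitian by
    simpa using Matrix.isHermitian_conjTranspose_mul_self A).eigenvalues i)

/-- `Q` is a `d × d` real orthogonal matrix. -/
def IsOrtho {d : ℕ} (Q : Matrix (Fin d) (Fin d) ℝ) : Prop :=
  Qᵀ * Q = 1 ∧ Q * Qᵀ = 1

open scoped ComplexOrder in
/-- The positive semidefinite square root of a positive semidefinite matrix
(the definition `Matrix.PosSemidef.sqrt` of the older Mathlib, since removed). -/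
def Matrix.PosSemidef.sqrt {n 𝕜 : Type*} [Fintype n] [DecidableEq n] [RCLike 𝕜]
    {A : Matrix n n 𝕜} (hA : A.PosSemidef) : Matrix n n 𝕜 :=
  hA.1.eigenvectorUnitary.1 * diagonal ((↑) ∘ (Real.sqrt ·) ∘ hA.1.eigenvalues) *
    (star hA.1.eigenvectorUnitary : Matrix n n 𝕜)

open scoped Classical in
/-- The matrix sign function `sgn(A) = A (AᵀA)^{-1/2} = U Vᵀ` for `A = U Σ Vᵀ`
(junk value if `AᵀA` is not positive semidefinite, which never happens over `ℝ`). -/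
def msgn {d : ℕ} (A : Matrix (Fin d) (Fin d) ℝ) : Matrix (Fin d) (Fin d) ℝ :=
  if h : (Aᵀ * A).PosSemidef then A * (h.sqrt)⁻¹ else 1

/-- The `i`-th `d × d` block of an `nd × d` block matrix. -/
def blk {d n : ℕ} (X : Matrix (Fin n × Fin d) (Fin d) ℝ) (i : Fin n) :
    Matrix (Fin d) (Fin d) ℝ :=
  Matrix.of fun a b => X (i, a) b

/-- `X ∈ O(d)^{⊗n}`: every `d × d` block of `X` is orthogonal. -/
def BlockOrtho {d n : ℕ} (X : Matrix (Fin n × Fin d) (Fin d) ℝ) : Prop :=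
  ∀ i, IsOrtho (blk X i)

/-- Blockwise matrix sign function on `nd × d` block matrices. -/
def bsgn {d n : ℕ} (X : Matrix (Fin n × Fin d) (Fin d) ℝ) :
    Matrix (Fin n × Fin d) (Fin d) ℝ :=
  Matrix.of fun p b => msgn (blk X p.1) p.2 b

/-- `d_F(X, Y) = min_{Q ∈ O(d)} ‖X - Y Q‖_F`. -/
def dF {d n : ℕ} (X Y : Matrix (Fin n × Fin d) (Fin d) ℝ) : ℝ :=
  ⨅ Q : {Q : Matrix (Fin d) (Fin d) ℝ // IsOrtho Q}, frob (X - Y * Q.1)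

/-- The `(i, j)` block of an `nd × nd` block matrix. -/
def blk2 {d n : ℕ} (A : Matrix (Fin n × Fin d) (Fin n × Fin d) ℝ) (i j : Fin n) :
    Matrix (Fin d) (Fin d) ℝ :=
  Matrix.of fun a b => A (i, a) (j, b)

/-- The `l`-th `nd × d` block column of an `nd × nd` block matrix. -/
def bcol {d n : ℕ} (W : Matrix (Fin n × Fin d) (Fin n × Fin d) ℝ) (l : Fin n) :
    Matrix (Fin n × Fin d) (Fin d) ℝ :=
  Matrix.of fun p b => W p (l, b)

/-- Projection onto the tangent space of `O(d)` at `X`: `P_{T_X}(G) = (G - X Gᵀ X)/2`. -/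
def tanProj {d : ℕ} (X G : Matrix (Fin d) (Fin d) ℝ) : Matrix (Fin d) (Fin d) ℝ :=
  (1 / 2 : ℝ) • (G - X * Gᵀ * X)

/-- The `i`-th block of the Euclidean gradient: `G_i = ∑_{j ≠ i} (X_i - A_{ij} X_j)`. -/
def Gblk {d n : ℕ} (A : Matrix (Fin n × Fin d) (Fin n × Fin d) ℝ)
    (X : Matrix (Fin n × Fin d) (Fin d) ℝ) (i : Fin n) : Matrix (Fin d) (Fin d) ℝ :=
  ∑ j ∈ Finset.univ.erase i, (blk X i - blk2 A i j * blk X j)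

/-- One Riemannian gradient step before retraction:
`F_i = X_i - μ P_{T_{X_i}}(G_i)`, assembled as an `nd × d` block matrix. -/
def Fstep {d n : ℕ} (A : Matrix (Fin n × Fin d) (Fin n × Fin d) ℝ) (μ : ℝ)
    (X : Matrix (Fin n × Fin d) (Fin d) ℝ) : Matrix (Fin n × Fin d) (Fin d) ℝ :=
  Matrix.of fun p b => (blk X p.1 - μ • tanProj (blk X p.1) (Gblk A X p.1)) p.2 b

/-- `Y` is an orthonormal matrix of eigenvectors for the top `d` eigenvalues of the
symmetric matrix `A`: its columns are orthonormal, its range is `A`-invariant, and the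
Rayleigh quotient on its range dominates the Rayleigh quotient on its orthogonal
complement. -/
def IsTopEigvecs {d n : ℕ} (A : Matrix (Fin n × Fin d) (Fin n × Fin d) ℝ)
    (Y : Matrix (Fin n × Fin d) (Fin d) ℝ) : Prop :=
  Yᵀ * Y = 1 ∧ (∃ Λ : Matrix (Fin d) (Fin d) ℝ, A * Y = Y * Λ) ∧
  ∀ v w : (Fin n × Fin d) → ℝ, (∃ c : Fin d → ℝ, v = Y.mulVec c) → Yᵀ.mulVec w = 0 →
    (w ⬝ᵥ w) * (v ⬝ᵥ A.mulVec v) ≥ (v ⬝ᵥ v) * (w ⬝ᵥ A.mulVec w)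

/-- `W` is the symmetric block Gaussian noise matrix: `W` is symmetric, its diagonal
blocks vanish, each entry in an off-diagonal block `W_{ij}` (`i < j`) is standard
Gaussian, and all these entries (over all blocks with `i < j`) are mutually
independent. -/
def IsGaussianNoise {d n : ℕ} {Ω : Type*} [MeasurableSpace Ω] (P : Measure Ω)
    (W : Ω → Matrix (Fin n × Fin d) (Fin n × Fin d) ℝ) : Prop :=
  (∀ p q, Measurable fun ω => W ω p q) ∧
  (∀ ω, (W ω)ᵀ = W ω) ∧
  (∀ ω (i : Fin n) (a b : Fin d), W ω (i, a) (i, b) = 0) ∧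
  (∀ (i j : Fin n) (a b : Fin d), i < j →
    P.map (fun ω => W ω (i, a) (j, b)) = gaussianReal 0 1) ∧
  iIndepFun
    (fun (e : {x : (Fin n × Fin d) × (Fin n × Fin d) // x.1.1 < x.2.1}) ω =>
      W ω e.1.1 e.1.2) P

/-- Leave-one-out noise: set the `l`-th block row and block column of `W` to zero. -/
def looNoise {d n : ℕ} (W : Matrix (Fin n × Fin d) (Fin n × Fin d) ℝ) (l : Fin n) :
    Matrix (Fin n × Fin d) (Fin n × Fin d) ℝ :=
  Matrix.of fun p q => if p.1 = l ∨ q.1 = l then 0 else W p q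

/-- The Newton–Schulz iteration `S_0 = A`, `S_{t+1} = ½ S_t (3 I - S_tᵀ S_t)`. -/
def nsIter {d : ℕ} (A : Matrix (Fin d) (Fin d) ℝ) : ℕ → Matrix (Fin d) (Fin d) ℝ
  | 0 => A
  | (t + 1) => (1 / 2 : ℝ) • (nsIter A t * ((3 : ℝ) • (1 : Matrix (Fin d) (Fin d) ℝ) - (nsIter A t)ᵀ * nsIter A t))



/-! ### Auxiliary material for Newton–Schulz -/

section NSAux

open scoped Matrix.Norms.L2Operator

variable {n : Type*} [Fintype n] [DecidableEq n]

lemma spec_eq_norm' (A : Matrix n n ℝ) : spec A = ‖A‖ := rfl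

lemma spec_nn (A : Matrix n n ℝ) : 0 ≤ spec A := by rw [spec_eq_norm']; exact norm_nonneg _

lemma spec_tmul (A : Matrix n n ℝ) : spec (Aᵀ * A) = spec A * spec A := by
  rw [spec_eq_norm', spec_eq_norm', ← Matrix.conjTranspose_eq_transpose_of_trivial]
  exact Matrix.l2_opNorm_conjTranspose_mul_self A

lemma spec_mul_le' (A B : Matrix n n ℝ) : spec (A * B) ≤ spec A * spec B := by
  rw [spec_eq_norm', spec_eq_norm', spec_eq_norm']; exact Matrix.l2_opNorm_mul A B

lemma spec_one_le : spec (1 : Matrix n n ℝ) ≤ 1 := by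
  rw [spec_eq_norm', Matrix.cstar_norm_def, _root_.map_one, ContinuousLinearMap.one_def]
  exact ContinuousLinearMap.norm_id_le

lemma spec_orth_left {Q : Matrix n n ℝ} (hQ : Qᵀ * Q = 1) (X : Matrix n n ℝ) :
    spec (Q * X) = spec X := by
  have h1 : (Q * X)ᵀ * (Q * X) = Xᵀ * X := by
    rw [Matrix.transpose_mul, Matrix.mul_assoc, ← Matrix.mul_assoc Qᵀ, hQ, Matrix.one_mul]
  have h2 := spec_tmul (Q * X)
  rw [h1, spec_tmul] at h2
  nlinarith [spec_nn (Q * X), spec_nn X]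

lemma spec_orth_le {Q : Matrix n n ℝ} (hQ : Qᵀ * Q = 1) : spec Q ≤ 1 := by
  have h2 := spec_tmul Q
  rw [hQ] at h2
  nlinarith [spec_nn Q, spec_one_le (n := n)]

omit [DecidableEq n] in
lemma coord_le_norm (w : EuclideanSpace ℝ n) (i : n) : |w i| ≤ ‖w‖ := by
  rw [EuclideanSpace.norm_eq, ← Real.sqrt_sq_eq_abs]
  simp only [Real.norm_eq_abs, sq_abs]
  apply Real.sqrt_le_sqrt
  exact Finset.single_le_sum (f := fun j => w j ^ 2) (fun j _ => sq_nonneg _) (Finset.mem_univ i)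

lemma spec_diagonal_le {v : n → ℝ} {c : ℝ} (hc : 0 ≤ c) (h : ∀ i, |v i| ≤ c) :
    spec (Matrix.diagonal v) ≤ c := by
  apply ContinuousLinearMap.opNorm_le_bound _ hc
  intro x
  have hx : (LinearMap.toContinuousLinearMap (Matrix.toEuclideanLin (Matrix.diagonal v))) x
      = (WithLp.equiv 2 _).symm ((Matrix.diagonal v) *ᵥ (WithLp.equiv 2 _ x)) := rfl
  rw [hx, EuclideanSpace.norm_eq]
  have hxn : ‖x‖ = Real.sqrt (∑ i, ‖x i‖ ^ 2) := EuclideanSpace.norm_eq x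
  calc Real.sqrt (∑ i, ‖((WithLp.equiv 2 _).symm
        ((Matrix.diagonal v) *ᵥ (WithLp.equiv 2 _ x))) i‖ ^ 2)
      ≤ Real.sqrt (∑ i, c ^ 2 * ‖x i‖ ^ 2) := by
        apply Real.sqrt_le_sqrt
        apply Finset.sum_le_sum
        intro i _
        have hcoord : ((WithLp.equiv 2 _).symm
            ((Matrix.diagonal v) *ᵥ (WithLp.equiv 2 _ x))) i = v i * x i := by
          simp [Matrix.mulVec_diagonal]
        rw [hcoord, Real.norm_eq_abs, Real.norm_eq_abs, abs_mul, mul_pow]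
        have h1 := h i
        have h2 : |v i| ^ 2 ≤ c ^ 2 := by nlinarith [abs_nonneg (v i)]
        nlinarith [sq_nonneg (x i), abs_nonneg (x i), sq_abs (x i)]
    _ = c * ‖x‖ := by
        rw [← Finset.mul_sum, Real.sqrt_mul (by positivity), hxn, Real.sqrt_sq hc]

lemma spec_entry_le (A : Matrix n n ℝ) (i j : n) : |A i j| ≤ spec A := by
  have h1 : (LinearMap.toContinuousLinearMap (Matrix.toEuclideanLin A))
      (EuclideanSpace.single j (1:ℝ)) =
      (WithLp.equiv 2 _).symm (A *ᵥ (WithLp.equiv 2 _ (EuclideanSpace.single j (1:ℝ)))) := rfl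
  have h2 : ((LinearMap.toContinuousLinearMap (Matrix.toEuclideanLin A))
      (EuclideanSpace.single j (1:ℝ))) i = A i j := by
    rw [h1]; simp [Matrix.mulVec_single]
  calc |A i j| ≤ ‖(LinearMap.toContinuousLinearMap (Matrix.toEuclideanLin A))
        (EuclideanSpace.single j (1:ℝ))‖ := h2 ▸ coord_le_norm _ i
    _ ≤ spec A * ‖EuclideanSpace.single j (1:ℝ)‖ := ContinuousLinearMap.le_opNorm _ _
    _ = spec A := by rw [EuclideanSpace.norm_single]; simp

lemma spec_conj_le {U : Matrix n n ℝ} (hU1 : Uᵀ * U = 1) (hU2 : U * Uᵀ = 1)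
    {v : n → ℝ} {c : ℝ} (hc : 0 ≤ c) (h : ∀ i, |v i| ≤ c) :
    spec (U * Matrix.diagonal v * Uᵀ) ≤ c := by
  have hU : spec U ≤ 1 := spec_orth_le hU1
  have hUt : spec Uᵀ ≤ 1 := spec_orth_le (by rw [Matrix.transpose_transpose]; exact hU2)
  have h1 := spec_mul_le' (U * Matrix.diagonal v) Uᵀ
  have h2 := spec_mul_le' U (Matrix.diagonal v)
  have h3 := spec_diagonal_le hc h
  nlinarith [spec_nn (U * Matrix.diagonal v), spec_nn Uᵀ, spec_nn U,
    spec_nn (Matrix.diagonal v)]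

lemma spec_conj_ge {U : Matrix n n ℝ} (hU1 : Uᵀ * U = 1) (hU2 : U * Uᵀ = 1)
    (v : n → ℝ) (i : n) : |v i| ≤ spec (U * Matrix.diagonal v * Uᵀ) := by
  set T := Matrix.toEuclideanCLM (𝕜 := ℝ) (n := n) with hT
  have hTnorm : ∀ B : Matrix n n ℝ, ‖T B‖ = spec B := fun _ => rfl
  set e : EuclideanSpace ℝ n := EuclideanSpace.single i (1:ℝ) with he
  have hen : ‖e‖ = 1 := by rw [he, EuclideanSpace.norm_single]; simp
  set x : EuclideanSpace ℝ n := T U e with hx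
  have hU : spec U ≤ 1 := spec_orth_le hU1
  have hUt : spec Uᵀ ≤ 1 := spec_orth_le (by rw [Matrix.transpose_transpose]; exact hU2)
  have hx1 : ‖x‖ ≤ 1 := by
    calc ‖x‖ ≤ ‖T U‖ * ‖e‖ := (T U).le_opNorm e
      _ ≤ 1 := by rw [hTnorm, hen, mul_one]; exact hU
  have hback : T Uᵀ x = e := by
    rw [hx, ← ContinuousLinearMap.comp_apply, ← ContinuousLinearMap.mul_def,
      ← _root_.map_mul, hU1, _root_.map_one, ContinuousLinearMap.one_def,
      ContinuousLinearMap.coe_id', id_eq]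
  have hx2 : (1:ℝ) ≤ ‖x‖ := by
    have h5 : ‖e‖ ≤ ‖T Uᵀ‖ * ‖x‖ := hback ▸ (T Uᵀ).le_opNorm x
    rw [hen, hTnorm] at h5
    nlinarith [norm_nonneg x, spec_nn Uᵀ]
  have hDe : T (Matrix.diagonal v) e = v i • e := by
    apply (WithLp.equiv 2 (n → ℝ)).injective
    ext j
    by_cases hji : j = i <;> simp [hT, he, hji, Matrix.mulVec_diagonal, EuclideanSpace.single_apply]
  have hMx : T (U * Matrix.diagonal v * Uᵀ) x = v i • x := by
    have step1 : U * Matrix.diagonal v * Uᵀ * U = U * Matrix.diagonal v := by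
      rw [Matrix.mul_assoc, hU1, Matrix.mul_one]
    have step2 : T (U * Matrix.diagonal v * Uᵀ) x = T (U * Matrix.diagonal v * Uᵀ * U) e := by
      rw [hx, ← ContinuousLinearMap.comp_apply, ← ContinuousLinearMap.mul_def, ← _root_.map_mul]
    rw [step2, step1, _root_.map_mul, ContinuousLinearMap.mul_apply, hDe, _root_.map_smul, ← hx]
  calc |v i| ≤ |v i| * ‖x‖ := by nlinarith [abs_nonneg (v i)]
    _ = ‖v i • x‖ := by rw [norm_smul, Real.norm_eq_abs]
    _ = ‖T (U * Matrix.diagonal v * Uᵀ) x‖ := by rw [hMx]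
    _ ≤ ‖T (U * Matrix.diagonal v * Uᵀ)‖ * ‖x‖ := ContinuousLinearMap.le_opNorm _ _
    _ ≤ spec (U * Matrix.diagonal v * Uᵀ) := by
        rw [hTnorm]
        nlinarith [spec_nn (U * Matrix.diagonal v * Uᵀ)]

end NSAux

lemma psd_sqrt_props {d : ℕ} {A : Matrix (Fin d) (Fin d) ℝ} (hA : A.PosSemidef) :
    hA.sqrt.PosSemidef ∧ hA.sqrt * hA.sqrt = A := by
  set V : Matrix (Fin d) (Fin d) ℝ := (hA.1.eigenvectorUnitary : Matrix (Fin d) (Fin d) ℝ) with hV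
  have hVV : (star V) * V = 1 := Matrix.mem_unitaryGroup_iff'.mp hA.1.eigenvectorUnitary.2
  have hD : (diagonal ((↑) ∘ (Real.sqrt ·) ∘ hA.1.eigenvalues) : Matrix (Fin d) (Fin d) ℝ).PosSemidef := by
    rw [Matrix.posSemidef_diagonal_iff]
    intro i
    simp [Real.sqrt_nonneg]
  constructor
  · have h := hD.mul_mul_conjTranspose_same V
    rw [← Matrix.star_eq_conjTranspose] at h
    exact h
  · have hs := hA.1.spectral_theorem
    rw [Unitary.conjStarAlgAut_apply] at hs
    show V * _ * star V * (V * _ * star V) = A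
    conv_rhs => rw [hs]
    simp only [Matrix.mul_assoc]
    rw [← Matrix.mul_assoc (star V) V, hVV, Matrix.one_mul, ← Matrix.mul_assoc (diagonal _),
      Matrix.diagonal_mul_diagonal]
    congr 3
    funext i
    simp [Real.mul_self_sqrt (hA.eigenvalues_nonneg i)]

/-- The scalar Newton–Schulz iteration. -/
def nsScalar : ℕ → ℝ → ℝ
  | 0, x => x
  | (t+1), x => (1/2) * (nsScalar t x * (3 - (nsScalar t x)^2))

lemma nsScalar_key {x : ℝ} (hx : 0 ≤ x) (hu : |1 - x^2| ≤ 1) (t : ℕ) :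
    0 ≤ nsScalar t x ∧ |1 - (nsScalar t x)^2| ≤ |1 - x^2| ^ (2^t) := by
  induction t with
  | zero => exact ⟨hx, by simp [nsScalar]⟩
  | succ t ih =>
    obtain ⟨hy, hb⟩ := ih
    set y := nsScalar t x with hydef
    have hu1 : |1 - y^2| ≤ 1 := hb.trans (pow_le_one₀ (abs_nonneg _) hu)
    obtain ⟨hl, hr⟩ := abs_le.mp hu1
    have h3 : (1:ℝ) ≤ 3 - y^2 := by nlinarith
    have hstep : nsScalar (t+1) x = (1/2) * (y * (3 - y^2)) := rfl
    constructor
    · rw [hstep]; nlinarith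
    · have key : 1 - (nsScalar (t+1) x)^2 = (1-y^2)^2 * (3 + (1-y^2)) / 4 := by
        rw [hstep]; ring
      rw [key]
      have habs : |(1-y^2)^2 * (3 + (1-y^2)) / 4| ≤ (1-y^2)^2 := by
        rw [abs_div, abs_mul, abs_of_nonneg (sq_nonneg (1-y^2))]
        have h4 : |3 + (1 - y^2)| ≤ 4 := abs_le.mpr ⟨by linarith, by linarith⟩
        have h5 : |(4:ℝ)| = 4 := by norm_num
        rw [h5]
        nlinarith [sq_nonneg (1-y^2), abs_nonneg (3 + (1-y^2))]
      refine habs.trans ?_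
      have h6 : (1-y^2)^2 ≤ (|1 - x^2|^(2^t))^2 := by
        rw [← sq_abs]
        exact pow_le_pow_left₀ (abs_nonneg _) hb 2
      calc (1-y^2)^2 ≤ (|1 - x^2|^(2^t))^2 := h6
        _ = |1 - x^2| ^ (2^(t+1)) := by rw [← pow_mul, ← pow_succ]

/-- If `‖I - AᵀA‖ < 1` (operator norm), then the Newton–Schulz iterates
converge to `sgn A`, with `‖S_t - sgn A‖ ≤ ‖I - S_tᵀ S_t‖ ≤ ‖I - AᵀA‖ ^ (2 ^ t)`. -/
theorem newton_schulz_convergence {d : ℕ} (A : Matrix (Fin d) (Fin d) ℝ)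
    (hA : spec ((1 : Matrix (Fin d) (Fin d) ℝ) - Aᵀ * A) < 1) :
    Filter.Tendsto (nsIter A) Filter.atTop (nhds (msgn A)) ∧
    ∀ t : ℕ,
      spec (nsIter A t - msgn A)
          ≤ spec ((1 : Matrix (Fin d) (Fin d) ℝ) - (nsIter A t)ᵀ * nsIter A t) ∧
      spec ((1 : Matrix (Fin d) (Fin d) ℝ) - (nsIter A t)ᵀ * nsIter A t)
          ≤ spec ((1 : Matrix (Fin d) (Fin d) ℝ) - Aᵀ * A) ^ (2 ^ t) := by
  classical
  have hM : (Aᵀ * A).PosSemidef := by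
    have h := Matrix.posSemidef_conjTranspose_mul_self A
    rwa [Matrix.conjTranspose_eq_transpose_of_trivial] at h
  set R : Matrix (Fin d) (Fin d) ℝ := hM.sqrt with hRdef
  have hRps : R.PosSemidef := (psd_sqrt_props hM).1
  have hRH : R.IsHermitian := hRps.isHermitian
  have hRT : Rᵀ = R := by
    have h := hRH
    rwa [Matrix.IsHermitian, Matrix.conjTranspose_eq_transpose_of_trivial] at h
  have hRR : R * R = Aᵀ * A := (psd_sqrt_props hM).2
  set U : Matrix (Fin d) (Fin d) ℝ := (hRH.eigenvectorUnitary : Matrix (Fin d) (Fin d) ℝ)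
    with hUdef
  set lam : Fin d → ℝ := hRH.eigenvalues with hlamdef
  have hUmem := hRH.eigenvectorUnitary.2
  have hU1 : Uᵀ * U = 1 := by
    have h := (Matrix.mem_unitaryGroup_iff'.mp hUmem)
    rwa [Matrix.star_eq_conjTranspose, Matrix.conjTranspose_eq_transpose_of_trivial] at h
  have hU2 : U * Uᵀ = 1 := by
    have h := (Matrix.mem_unitaryGroup_iff.mp hUmem)
    rwa [Matrix.star_eq_conjTranspose, Matrix.conjTranspose_eq_transpose_of_trivial] at h
  have hCmul : ∀ v w : Fin d → ℝ, (U * Matrix.diagonal v * Uᵀ) * (U * Matrix.diagonal w * Uᵀ)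
      = U * Matrix.diagonal (v * w) * Uᵀ := by
    intro v w
    simp only [Matrix.mul_assoc]
    rw [← Matrix.mul_assoc Uᵀ U, hU1, Matrix.one_mul,
      ← Matrix.mul_assoc (Matrix.diagonal v), Matrix.diagonal_mul_diagonal]
    rfl
  have hCone : U * Matrix.diagonal (1 : Fin d → ℝ) * Uᵀ = 1 := by
    have hd1 : Matrix.diagonal (1 : Fin d → ℝ) = 1 := Matrix.diagonal_one
    rw [hd1, Matrix.mul_one, hU2]
  have hCsub : ∀ v w : Fin d → ℝ, (U * Matrix.diagonal v * Uᵀ) - (U * Matrix.diagonal w * Uᵀ)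
      = U * Matrix.diagonal (v - w) * Uᵀ := by
    intro v w
    have hds : Matrix.diagonal (v - w) = Matrix.diagonal v - Matrix.diagonal w := by
      rw [Matrix.diagonal_sub]; rfl
    rw [hds, Matrix.mul_sub, Matrix.sub_mul]
  have hCsmul : ∀ (r : ℝ) (v : Fin d → ℝ), r • (U * Matrix.diagonal v * Uᵀ)
      = U * Matrix.diagonal (r • v) * Uᵀ := by
    intro r v
    rw [Matrix.diagonal_smul, Matrix.mul_smul, Matrix.smul_mul]

  have hCT : ∀ v : Fin d → ℝ, (U * Matrix.diagonal v * Uᵀ)ᵀ = U * Matrix.diagonal v * Uᵀ := by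
    intro v
    rw [Matrix.transpose_mul, Matrix.transpose_mul, Matrix.transpose_transpose,
      Matrix.diagonal_transpose, Matrix.mul_assoc]
  have hRC : R = U * Matrix.diagonal lam * Uᵀ := by
    have h := hRH.spectral_theorem
    rw [Unitary.conjStarAlgAut_apply, Matrix.star_eq_conjTranspose,
      Matrix.conjTranspose_eq_transpose_of_trivial] at h
    exact h
  have hlam0 : ∀ i, 0 ≤ lam i := fun i => hRps.eigenvalues_nonneg i
  set hh : ℝ := spec ((1 : Matrix (Fin d) (Fin d) ℝ) - Aᵀ * A) with hhdef
  have h0 : 0 ≤ hh := spec_nn _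
  have hAA : (1 : Matrix (Fin d) (Fin d) ℝ) - Aᵀ * A
      = U * Matrix.diagonal ((1 : Fin d → ℝ) - lam * lam) * Uᵀ := by
    rw [← hCsub, hCone, ← hRR, hRC, hCmul]
  have hup : ∀ i, |1 - lam i * lam i| ≤ hh := by
    intro i
    have h := spec_conj_ge hU1 hU2 ((1 : Fin d → ℝ) - lam * lam) i
    rw [← hAA] at h
    simpa using h
  have hu1 : ∀ i, |1 - (lam i)^2| ≤ 1 := by
    intro i
    rw [sq]
    exact (hup i).trans (le_of_lt hA)
  have hscal : ∀ t i, 0 ≤ nsScalar t (lam i)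
      ∧ |1 - (nsScalar t (lam i))^2| ≤ |1 - (lam i)^2| ^ (2^t) :=
    fun t i => nsScalar_key (hlam0 i) (hu1 i) t
  -- invertibility of R
  have hlamne : ∀ i, lam i ≠ 0 := by
    intro i hzero
    have h1 := hup i
    rw [hzero] at h1
    simp only [mul_zero, sub_zero, abs_one] at h1
    linarith
  have hdet : IsUnit R.det := by
    rw [hRH.det_eq_prod_eigenvalues]
    refine isUnit_iff_ne_zero.mpr (Finset.prod_ne_zero_iff.mpr fun i _ => ?_)
    simpa using hlamne i
  have hRinv : R⁻¹ * R = 1 := Matrix.nonsing_inv_mul R hdet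
  have hRinv' : R * R⁻¹ = 1 := Matrix.mul_nonsing_inv R hdet
  have hmsgn : msgn A = A * R⁻¹ := by
    simp only [msgn, dif_pos hM]
    rfl
  have hQ1 : (msgn A)ᵀ * msgn A = 1 := by
    rw [hmsgn, Matrix.transpose_mul, Matrix.transpose_nonsing_inv, hRT]
    calc R⁻¹ * Aᵀ * (A * R⁻¹) = R⁻¹ * ((Aᵀ * A) * R⁻¹) := by
          simp only [Matrix.mul_assoc]
      _ = R⁻¹ * (R * (R * R⁻¹)) := by rw [← hRR, Matrix.mul_assoc]
      _ = 1 := by rw [hRinv', Matrix.mul_one, hRinv]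
  have hQR : msgn A * R = A := by
    rw [hmsgn, Matrix.mul_assoc, hRinv, Matrix.mul_one]
  set mu : ℕ → Fin d → ℝ := fun t i => nsScalar t (lam i) with hmudef
  have hkey : ∀ t, nsIter A t = msgn A * (U * Matrix.diagonal (mu t) * Uᵀ) := by
    intro t
    induction t with
    | zero =>
      have hmu0 : mu 0 = lam := rfl
      rw [hmu0, ← hRC]
      show A = msgn A * R
      rw [hQR]
    | succ t ih =>
      have hStS : (nsIter A t)ᵀ * nsIter A t = U * Matrix.diagonal (mu t * mu t) * Uᵀ := by
        rw [ih, Matrix.transpose_mul, hCT]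
        calc (U * Matrix.diagonal (mu t) * Uᵀ) * (msgn A)ᵀ * (msgn A
              * (U * Matrix.diagonal (mu t) * Uᵀ))
            = (U * Matrix.diagonal (mu t) * Uᵀ) * (((msgn A)ᵀ * msgn A)
              * (U * Matrix.diagonal (mu t) * Uᵀ)) := by simp only [Matrix.mul_assoc]
          _ = U * Matrix.diagonal (mu t * mu t) * Uᵀ := by
              rw [hQ1, Matrix.one_mul, hCmul]
      show (1 / 2 : ℝ) • (nsIter A t * ((3 : ℝ) • (1 : Matrix (Fin d) (Fin d) ℝ)
          - (nsIter A t)ᵀ * nsIter A t)) = _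
      rw [hStS, ih, ← hCone, hCsmul, hCsub, Matrix.mul_assoc (msgn A), hCmul,
        ← Matrix.mul_smul, hCsmul]
      have harg : (1/2 : ℝ) • (mu t * ((3:ℝ) • (1 : Fin d → ℝ) - mu t * mu t)) = mu (t+1) := by
        funext i
        have hns : nsScalar (t+1) (lam i)
            = (1/2) * (nsScalar t (lam i) * (3 - (nsScalar t (lam i))^2)) := rfl
        show (1/2 : ℝ) * ((mu t * ((3:ℝ) • (1 : Fin d → ℝ) - mu t * mu t)) i) = mu (t+1) i
        simp only [Pi.mul_apply, Pi.sub_apply, Pi.smul_apply, Pi.one_apply, smul_eq_mul, hmudef]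
        rw [hns]
        ring
      rw [harg]
  have hStS : ∀ t, (nsIter A t)ᵀ * nsIter A t = U * Matrix.diagonal (mu t * mu t) * Uᵀ := by
    intro t
    rw [hkey t, Matrix.transpose_mul, hCT]
    calc (U * Matrix.diagonal (mu t) * Uᵀ) * (msgn A)ᵀ * (msgn A
          * (U * Matrix.diagonal (mu t) * Uᵀ))
        = (U * Matrix.diagonal (mu t) * Uᵀ) * (((msgn A)ᵀ * msgn A)
          * (U * Matrix.diagonal (mu t) * Uᵀ)) := by simp only [Matrix.mul_assoc]
      _ = U * Matrix.diagonal (mu t * mu t) * Uᵀ := by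
          rw [hQ1, Matrix.one_mul, hCmul]
  have hE : ∀ t, (1 : Matrix (Fin d) (Fin d) ℝ) - (nsIter A t)ᵀ * nsIter A t
      = U * Matrix.diagonal ((1 : Fin d → ℝ) - mu t * mu t) * Uᵀ := by
    intro t
    rw [hStS t, ← hCsub, hCone]
  have hdiff : ∀ t, nsIter A t - msgn A
      = msgn A * (U * Matrix.diagonal (mu t - 1) * Uᵀ) := by
    intro t
    conv_lhs => rw [hkey t]
    rw [← hCsub]
    rw [Matrix.mul_sub, hCone, Matrix.mul_one]
  have part2 : ∀ t, spec ((1 : Matrix (Fin d) (Fin d) ℝ) - (nsIter A t)ᵀ * nsIter A t)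
      ≤ hh ^ (2^t) := by
    intro t
    rw [hE t]
    apply spec_conj_le hU1 hU2 (pow_nonneg h0 _)
    intro i
    have h7 := (hscal t i).2
    have h8 : |1 - (lam i)^2| ^ (2^t) ≤ hh ^ (2^t) := by
      apply pow_le_pow_left₀ (abs_nonneg _)
      rw [sq]
      exact hup i
    have h9 : |((1 : Fin d → ℝ) - mu t * mu t) i| = |1 - (nsScalar t (lam i))^2| := by
      simp only [Pi.sub_apply, Pi.mul_apply, Pi.one_apply, hmudef, sq]
    rw [h9]
    exact h7.trans h8
  have part1 : ∀ t, spec (nsIter A t - msgn A)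
      ≤ spec ((1 : Matrix (Fin d) (Fin d) ℝ) - (nsIter A t)ᵀ * nsIter A t) := by
    intro t
    rw [hdiff t, spec_orth_left hQ1, hE t]
    apply spec_conj_le hU1 hU2 (spec_nn _)
    intro i
    have hy := (hscal t i).1
    have h10 : |(mu t - 1) i| ≤ |1 - (mu t i)^2| := by
      simp only [Pi.sub_apply, Pi.one_apply]
      have hfac : 1 - (mu t i)^2 = -((mu t i - 1) * (mu t i + 1)) := by ring
      rw [hfac, abs_neg, abs_mul, abs_of_nonneg (by
        have : 0 ≤ mu t i := hy
        linarith : 0 ≤ mu t i + 1)]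
      nlinarith [abs_nonneg (mu t i - 1), hy]
    refine h10.trans ?_
    have h11 := spec_conj_ge hU1 hU2 ((1 : Fin d → ℝ) - mu t * mu t) i
    have h12 : |((1 : Fin d → ℝ) - mu t * mu t) i| = |1 - (mu t i)^2| := by
      simp only [Pi.sub_apply, Pi.mul_apply, Pi.one_apply, sq]
    rw [h12] at h11
    exact h11
  have hbound : ∀ t, spec (nsIter A t - msgn A) ≤ hh ^ (2^t) :=
    fun t => (part1 t).trans (part2 t)
  refine ⟨?_, fun t => ⟨part1 t, part2 t⟩⟩
  apply tendsto_pi_nhds.mpr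
  intro i
  apply tendsto_pi_nhds.mpr
  intro j
  have hz : Filter.Tendsto (fun t : ℕ => hh ^ (2^t)) Filter.atTop (nhds 0) :=
    (tendsto_pow_atTop_nhds_zero_of_lt_one h0 hA).comp
      (tendsto_pow_atTop_atTop_of_one_lt one_lt_two)
  have hsq : Filter.Tendsto (fun t => nsIter A t i j - msgn A i j) Filter.atTop (nhds 0) := by
    apply squeeze_zero_norm ?_ hz
    intro t
    rw [Real.norm_eq_abs]
    have h13 := spec_entry_le (nsIter A t - msgn A) i j
    rw [Matrix.sub_apply] at h13
    exact h13.trans (hbound t)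
  have h14 := hsq.add_const (msgn A i j)
  simpa using h14

end
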